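/- Let N ≥ 1 and let A = [A(i,j)]_{i,j=1}^N be a matrix with entries in {0,1}. Then there exist a complex Hilbert space H, a unit vector v_0 ∈ H, and bounded linear operators T_1, …, T_N on H such that, with P_0 denoting the orthogonal projection of H onto the one-dimensional subspace spanned by v_0, the following operator relations hold: Σ_{j=1}^N T_j T_j^* + P_0 = 1, and T_i^* T_i = Σ_{j=1}^N A(i,j) T_j T_j^* + P_0 for every i = 1,…,N. -/

import Mathlib

open Matrix ContinuousLinearMap

noncomputable section

/-- `A` has entries in `{0,1}`. -/
def ZeroOneEntries {N : ℕ} (A : Matrix (Fin N) (Fin N) ℤ) : Prop :=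
  ∀ i j, A i j = 0 ∨ A i j = 1

open scoped InnerProductSpace ENNReal

namespace Stmt8Aux

variable {α : Type} (Γ Γ' : α → Option α)

/-- `Γ` is co-injective: values determine the argument. -/
def Coinj : Prop := ∀ a a' b, Γ a = some b → Γ a' = some b → a = a'

/-- The composition operator on functions. -/
def opFun (f : α → ℂ) : α → ℂ := fun a => (Γ a).elim 0 f

lemma opFun_eq_of_some {a b : α} (f : α → ℂ) (h : Γ a = some b) :
    opFun Γ f a = f b := by simp [opFun, h]

lemma opFun_eq_of_none {a : α} (f : α → ℂ) (h : Γ a = none) :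
    opFun Γ f a = 0 := by simp [opFun, h]

abbrev ℓ2 (α : Type) := lp (fun _ : α => ℂ) 2

lemma memℓp_opFun (hΓ : Coinj Γ) (f : ℓ2 α) : Memℓp (opFun Γ f) 2 := by
  apply memℓp_gen
  have hsum : Summable fun b : α => ‖f b‖ ^ (2 : ℝ≥0∞).toReal :=
    (lp.memℓp f).summable (by norm_num)
  set S : Set α := {a | (Γ a).isSome} with hS
  have hm : ∀ a : S, Γ (a : α) = some ((Γ (a : α)).get a.2) := fun a =>
    (Option.some_get a.2).symm
  have hminj : Function.Injective (fun a : S => (Γ (a : α)).get a.2) := by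
    intro a a' h
    have h' : (Γ (a : α)).get a.2 = (Γ (a' : α)).get a'.2 := h
    exact Subtype.ext (hΓ _ _ _ (hm a) (by rw [hm a', ← h']))
  have h1 : Summable fun a : S => ‖opFun Γ f (a : α)‖ ^ (2 : ℝ≥0∞).toReal := by
    have := hsum.comp_injective hminj
    refine this.congr fun a => ?_
    rw [opFun_eq_of_some Γ f (hm a)]; rfl
  have h2 : Summable (S.indicator fun a => ‖opFun Γ (f : ∀ _ : α, ℂ) a‖ ^ (2 : ℝ≥0∞).toReal) :=
    summable_subtype_iff_indicator.mp h1
  refine h2.congr fun a => ?_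
  by_cases h : a ∈ S
  · simp [Set.indicator, h]
  · have hnone : Γ a = none := Option.not_isSome_iff_eq_none.mp h
    simp [Set.indicator, h, opFun_eq_of_none Γ _ hnone,
      Real.zero_rpow (by norm_num : (2 : ℝ≥0∞).toReal ≠ 0)]

lemma tsum_opFun_le (hΓ : Coinj Γ) (f : ℓ2 α) :
    ∑' a, ‖opFun Γ f a‖ ^ (2 : ℝ≥0∞).toReal ≤ ∑' a, ‖f a‖ ^ (2 : ℝ≥0∞).toReal := by
  have hsum : Summable fun b : α => ‖f b‖ ^ (2 : ℝ≥0∞).toReal :=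
    (lp.memℓp f).summable (by norm_num)
  set S : Set α := {a | (Γ a).isSome} with hS
  have hm : ∀ a : S, Γ (a : α) = some ((Γ (a : α)).get a.2) := fun a =>
    (Option.some_get a.2).symm
  have hminj : Function.Injective (fun a : S => (Γ (a : α)).get a.2) := by
    intro a a' h
    have h' : (Γ (a : α)).get a.2 = (Γ (a' : α)).get a'.2 := h
    exact Subtype.ext (hΓ _ _ _ (hm a) (by rw [hm a', ← h']))
  have hzero : ∀ a ∉ S, ‖opFun Γ (f : ∀ _ : α, ℂ) a‖ ^ (2 : ℝ≥0∞).toReal = 0 := by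
    intro a h
    have hnone : Γ a = none := Option.not_isSome_iff_eq_none.mp h
    simp [opFun_eq_of_none Γ _ hnone,
      Real.zero_rpow (by norm_num : (2 : ℝ≥0∞).toReal ≠ 0)]
  have heq : ∑' a : S, ‖opFun Γ (f : ∀ _ : α, ℂ) (a : α)‖ ^ (2 : ℝ≥0∞).toReal
      = ∑' a, ‖opFun Γ f a‖ ^ (2 : ℝ≥0∞).toReal := by
    refine tsum_subtype_eq_of_support_subset
      (f := fun a => ‖opFun Γ (f : ∀ _ : α, ℂ) a‖ ^ (2 : ℝ≥0∞).toReal) ?_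
    intro a ha
    by_contra h
    exact ha (hzero a h)
  rw [← heq]
  refine Summable.tsum_le_tsum_of_inj (fun a : S => (Γ (a : α)).get a.2) hminj
    (fun c _ => by positivity) (fun a : S => ?_) ?_ hsum
  · rw [opFun_eq_of_some Γ _ (hm a)]
  · have h1 : Summable fun a : S => ‖f ((Γ (a : α)).get a.2)‖ ^ (2 : ℝ≥0∞).toReal :=
      hsum.comp_injective hminj
    refine h1.congr fun a => ?_
    rw [opFun_eq_of_some Γ _ (hm a)]

/-- The composition operator as a continuous linear map on `ℓ²`. -/
def opCLM (hΓ : Coinj Γ) : ℓ2 α →L[ℂ] ℓ2 α :=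
  LinearMap.mkContinuous
    { toFun := fun f => ⟨opFun Γ f, memℓp_opFun Γ hΓ f⟩
      map_add' := by
        intro f g
        apply lp.ext
        funext a
        show opFun Γ (⇑f + ⇑g) a = opFun Γ f a + opFun Γ g a
        simp only [opFun]
        cases h : Γ a <;> simp
      map_smul' := by
        intro c f
        apply lp.ext
        funext a
        show opFun Γ (c • ⇑f) a = c • opFun Γ f a
        simp only [opFun]
        cases h : Γ a <;> simp }
    1 (by
      intro f
      rw [one_mul]
      have hp : (0 : ℝ) < (2 : ℝ≥0∞).toReal := by norm_num
      rw [lp.norm_eq_tsum_rpow hp, lp.norm_eq_tsum_rpow hp]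
      refine Real.rpow_le_rpow (tsum_nonneg fun a => by positivity) ?_ (by positivity)
      exact tsum_opFun_le Γ hΓ f)

@[simp] lemma opCLM_apply (hΓ : Coinj Γ) (f : ℓ2 α) (a : α) :
    (opCLM Γ hΓ f : ∀ _ : α, ℂ) a = opFun Γ f a := rfl

lemma opCLM_adjoint (hΓ : Coinj Γ) (hΓ' : Coinj Γ')
    (h : ∀ a b, Γ a = some b ↔ Γ' b = some a) :
    ContinuousLinearMap.adjoint (opCLM Γ hΓ) = opCLM Γ' hΓ' := by
  symm
  rw [ContinuousLinearMap.eq_adjoint_iff]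
  intro x y
  rw [lp.inner_eq_tsum, lp.inner_eq_tsum]
  let F : α → ℂ := fun b => ⟪opFun Γ' (x : ∀ _ : α, ℂ) b, (y : ∀ _ : α, ℂ) b⟫_ℂ
  let G : α → ℂ := fun a => ⟪(x : ∀ _ : α, ℂ) a, opFun Γ (y : ∀ _ : α, ℂ) a⟫_ℂ
  show ∑' b, F b = ∑' a, G a
  have hdom : ∀ a, G a ≠ 0 → (Γ a).isSome := by
    intro a ha
    by_contra hn
    exact ha (by
      simp [G, opFun_eq_of_none Γ _ (Option.not_isSome_iff_eq_none.mp hn)])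
  refine tsum_eq_tsum_of_ne_zero_bij (fun a => (Γ (a : α)).get (hdom _ a.2)) ?_ ?_ ?_
  · intro a a' hh
    have ha : Γ (a : α) = some ((Γ (a : α)).get (hdom _ a.2)) := (Option.some_get _).symm
    have ha' : Γ (a' : α) = some ((Γ (a' : α)).get (hdom _ a'.2)) := (Option.some_get _).symm
    have h2 : (Γ (a : α)).get (hdom _ a.2) = (Γ (a' : α)).get (hdom _ a'.2) := hh
    exact Subtype.ext (hΓ _ _ _ ha (by rw [ha', ← h2]))
  · intro b hb
    have hb' : (Γ' b).isSome := by
      by_contra hn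
      exact hb (by
        simp [F, opFun_eq_of_none Γ' _ (Option.not_isSome_iff_eq_none.mp hn)])
    set a := (Γ' b).get hb' with ha
    have hΓ'b : Γ' b = some a := (Option.some_get hb').symm
    have hΓa : Γ a = some b := (h a b).mpr hΓ'b
    have hFG : F b = G a := by
      simp only [F, G, opFun_eq_of_some Γ _ hΓa, opFun_eq_of_some Γ' _ hΓ'b]
    have haG : G a ≠ 0 := by rw [← hFG]; exact hb
    exact ⟨⟨a, haG⟩, by simp [hΓa]⟩
  · intro a
    have hΓa : Γ (a : α) = some ((Γ (a : α)).get (hdom _ a.2)) := (Option.some_get _).symm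
    simp only [F, G, opFun_eq_of_some Γ _ hΓa, opFun_eq_of_some Γ' _ ((h _ _).mp hΓa)]

section Words

variable {N : ℕ} (A : Matrix (Fin N) (Fin N) ℤ)

/-- Admissible words. -/
def Adm (l : List (Fin N)) : Prop := l.Chain' (fun a b => A a b = 1)

/-- The set of admissible words. -/
def W := {l : List (Fin N) // Adm A l}

instance : DecidableEq (W A) :=
  inferInstanceAs (DecidableEq {l : List (Fin N) // Adm A l})

open Classical in
/-- Partial map realizing `T_i`: strip off a leading `i`. -/
def ΓT (i : Fin N) : W A → Option (W A) := fun w =>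
  if h : w.val.head? = some i then some ⟨w.val.tail, List.IsChain.tail w.prop⟩ else none

open Classical in
/-- Partial map realizing `T_i^*`: prepend `i` when admissible. -/
def ΓS (i : Fin N) : W A → Option (W A) := fun w =>
  if h : Adm A (i :: w.val) then some ⟨i :: w.val, h⟩ else none

open Classical in
/-- Partial map realizing `P₀`. -/
def Γ₀ : W A → Option (W A) := fun w => if w.val = [] then some w else none

lemma ΓT_eq_some_iff (i : Fin N) (w b : W A) :
    ΓT A i w = some b ↔ w.val = i :: b.val := by
  unfold ΓT
  split_ifs with h
  · constructor
    · intro hb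
      obtain rfl : (⟨w.val.tail, List.IsChain.tail w.prop⟩ : W A) = b := Option.some_inj.mp hb
      exact (List.cons_head?_tail (Option.mem_def.mpr h)).symm
    · intro hw
      exact congrArg some (Subtype.ext (show (w.val).tail = b.val by rw [hw, List.tail_cons]))
  · constructor
    · intro hb; exact absurd hb (by simp)
    · intro hw; exact absurd (by rw [hw]; rfl) h

lemma ΓS_eq_some_iff (i : Fin N) (w b : W A) :
    ΓS A i w = some b ↔ b.val = i :: w.val := by
  unfold ΓS
  split_ifs with h
  · refine Option.some_inj.trans ?_
    exact ⟨fun hb => by rw [← hb], fun hb => Subtype.ext hb.symm⟩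
  · constructor
    · intro hb; exact absurd hb (by simp)
    · intro hb; exact absurd (hb ▸ b.prop) h

lemma Γ₀_eq_some_iff (w b : W A) :
    Γ₀ A w = some b ↔ w.val = [] ∧ b = w := by
  unfold Γ₀
  split_ifs with h
  · rw [Option.some_inj]
    exact ⟨fun hb => ⟨h, hb.symm⟩, fun hb => hb.2.symm⟩
  · exact ⟨fun hb => absurd hb (by simp), fun hb => absurd hb.1 h⟩

lemma coinj_ΓT (i : Fin N) : Coinj (ΓT A i) := by
  intro a a' b h1 h2
  rw [ΓT_eq_some_iff] at h1 h2
  exact Subtype.ext (h1.trans h2.symm)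

lemma coinj_ΓS (i : Fin N) : Coinj (ΓS A i) := by
  intro a a' b h1 h2
  rw [ΓS_eq_some_iff] at h1 h2
  exact Subtype.ext (List.cons_injective (h1.symm.trans h2))

lemma coinj_Γ₀ : Coinj (Γ₀ A) := by
  intro a a' b h1 h2
  rw [Γ₀_eq_some_iff] at h1 h2
  rw [← h1.2, h2.2]

lemma adj_cond (i : Fin N) : ∀ w b, ΓT A i w = some b ↔ ΓS A i b = some w := by
  intro w b
  rw [ΓT_eq_some_iff, ΓS_eq_some_iff]

lemma adj_cond₀ : ∀ w b, Γ₀ A w = some b ↔ Γ₀ A b = some w := by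
  intro w b
  rw [Γ₀_eq_some_iff, Γ₀_eq_some_iff]
  constructor
  · rintro ⟨h1, rfl⟩; exact ⟨h1, rfl⟩
  · rintro ⟨h1, rfl⟩; exact ⟨h1, rfl⟩

/-- The empty word. -/
def e0 : W A := ⟨[], List.isChain_nil⟩

/-- The operator `T_i`. -/
def Tc (i : Fin N) : ℓ2 (W A) →L[ℂ] ℓ2 (W A) := opCLM (ΓT A i) (coinj_ΓT A i)

/-- The operator `T_i^*`. -/
def Sc (i : Fin N) : ℓ2 (W A) →L[ℂ] ℓ2 (W A) := opCLM (ΓS A i) (coinj_ΓS A i)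

/-- The operator `P₀`. -/
def P0 : ℓ2 (W A) →L[ℂ] ℓ2 (W A) := opCLM (Γ₀ A) (coinj_Γ₀ A)

lemma Tc_adjoint (i : Fin N) : ContinuousLinearMap.adjoint (Tc A i) = Sc A i :=
  opCLM_adjoint _ _ _ _ (adj_cond A i)

lemma P0_selfAdjoint : IsSelfAdjoint (P0 A) :=
  ContinuousLinearMap.isSelfAdjoint_iff'.mpr (opCLM_adjoint _ _ _ _ (adj_cond₀ A))

lemma P0_apply (f : ℓ2 (W A)) (w : W A) :
    (P0 A f : ∀ _ : W A, ℂ) w = if w.val = [] then f w else 0 := by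
  unfold P0
  rw [opCLM_apply]
  by_cases h : w.val = []
  · rw [opFun_eq_of_some _ _ ((Γ₀_eq_some_iff A w w).mpr ⟨h, rfl⟩), if_pos h]
  · rw [opFun_eq_of_none _ _ ?_, if_neg h]
    cases hg : Γ₀ A w with
    | none => rfl
    | some b => exact absurd ((Γ₀_eq_some_iff A w b).mp hg).1 h

lemma P0_idem : IsIdempotentElem (P0 A) := by
  rw [IsIdempotentElem, ContinuousLinearMap.mul_def]
  ext f w
  show (P0 A (P0 A f) : ∀ _ : W A, ℂ) w = (P0 A f : ∀ _ : W A, ℂ) w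
  rw [P0_apply, P0_apply]
  by_cases h : w.val = [] <;> simp [h]

lemma TS_apply (i : Fin N) (f : ℓ2 (W A)) (w : W A) :
    ((Tc A i ∘L Sc A i) f : ∀ _ : W A, ℂ) w = if w.val.head? = some i then f w else 0 := by
  show (Tc A i (Sc A i f) : ∀ _ : W A, ℂ) w = _
  unfold Tc Sc
  rw [opCLM_apply]
  by_cases h : w.val.head? = some i
  · have hcons : w.val = i :: w.val.tail := (List.cons_head?_tail (Option.mem_def.mpr h)).symm
    have hb : ΓT A i w = some ⟨w.val.tail, List.IsChain.tail w.prop⟩ :=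
      (ΓT_eq_some_iff A i w _).mpr hcons
    have hs : ΓS A i ⟨w.val.tail, List.IsChain.tail w.prop⟩ = some w :=
      (ΓS_eq_some_iff A i _ w).mpr hcons
    rw [opFun_eq_of_some _ _ hb]
    exact (opFun_eq_of_some _ _ hs).trans (if_pos h).symm
  · rw [opFun_eq_of_none _ _ ?_, if_neg h]
    cases hg : ΓT A i w with
    | none => rfl
    | some b =>
        exact absurd (by rw [(ΓT_eq_some_iff A i w b).mp hg]; rfl) h

open Classical in
lemma ST_apply (i : Fin N) (f : ℓ2 (W A)) (w : W A) :
    ((Sc A i ∘L Tc A i) f : ∀ _ : W A, ℂ) w = if Adm A (i :: w.val) then f w else 0 := by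
  show (Sc A i (Tc A i f) : ∀ _ : W A, ℂ) w = _
  unfold Tc Sc
  rw [opCLM_apply]
  by_cases h : Adm A (i :: w.val)
  · have hb : ΓS A i w = some ⟨i :: w.val, h⟩ := (ΓS_eq_some_iff A i w _).mpr rfl
    have ht : ΓT A i ⟨i :: w.val, h⟩ = some w := (ΓT_eq_some_iff A i _ w).mpr rfl
    rw [opFun_eq_of_some _ _ hb]
    exact (opFun_eq_of_some _ _ ht).trans (if_pos h).symm
  · rw [opFun_eq_of_none _ _ ?_, if_neg h]
    cases hg : ΓS A i w with
    | none => rfl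
    | some b =>
        exact absurd ((ΓS_eq_some_iff A i w b).mp hg ▸ b.prop) h

/-- The vacuum vector. -/
def v0 : ℓ2 (W A) := lp.single 2 (e0 A) 1

lemma v0_apply (w : W A) : (v0 A : ∀ _ : W A, ℂ) w = if w = e0 A then 1 else 0 := by
  by_cases h : w = e0 A
  · subst h; rw [if_pos rfl]; exact lp.single_apply_self 2 (e0 A) 1
  · rw [if_neg h]; exact lp.single_apply_ne 2 (e0 A) 1 h

lemma norm_v0 : ‖v0 A‖ = 1 := by
  have := lp.norm_single (p := 2) (E := fun _ : W A => ℂ)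
    (by norm_num) (e0 A) (1 : ℂ)
  rw [v0, this, norm_one]

lemma P0_eq_smul (f : ℓ2 (W A)) : P0 A f = (f (e0 A) : ℂ) • v0 A := by
  apply lp.ext
  funext w
  have hs : ((f (e0 A) : ℂ) • v0 A : ℓ2 (W A)).val w
      = (f (e0 A) : ℂ) * (v0 A : ∀ _ : W A, ℂ) w := by
    rw [lp.coeFn_smul]; rfl
  show (P0 A f : ∀ _ : W A, ℂ) w = _
  rw [hs, P0_apply, v0_apply]
  by_cases h : w.val = []
  · have h2 : w = e0 A := Subtype.ext h
    subst h2
    rw [if_pos h, if_pos rfl, mul_one]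
  · have h2 : w ≠ e0 A := fun hc => h (by rw [hc]; rfl)
    simp [h, h2]

lemma range_P0 : LinearMap.range (P0 A : ℓ2 (W A) →ₗ[ℂ] ℓ2 (W A)) = Submodule.span ℂ {v0 A} := by
  apply le_antisymm
  · rintro x ⟨f, rfl⟩
    rw [ContinuousLinearMap.coe_coe, P0_eq_smul]
    exact Submodule.smul_mem _ _ (Submodule.mem_span_singleton_self _)
  · rw [Submodule.span_le, Set.singleton_subset_iff]
    refine ⟨v0 A, ?_⟩
    rw [ContinuousLinearMap.coe_coe, P0_eq_smul]
    have h1 : (v0 A : ∀ _ : W A, ℂ) (e0 A) = 1 := lp.single_apply_self 2 (e0 A) 1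
    rw [h1, one_smul]

end Words

end Stmt8Aux

/-- There exist a complex Hilbert space `H`, a unit vector `v₀ ∈ H` and bounded
operators `T₁, …, T_N` on `H` such that, with `P₀` the orthogonal projection onto
`ℂ·v₀` (i.e. the self-adjoint idempotent with range `span{v₀}`), the Toeplitz
relations `∑_j T_j T_j^* + P₀ = 1` and `T_i^* T_i = ∑_j A(i,j) T_j T_j^* + P₀`
hold. -/
theorem stmt8 (N : ℕ) [NeZero N] (A : Matrix (Fin N) (Fin N) ℤ)
    (h01 : ZeroOneEntries A) :
    ∃ (H : Type) (_ : NormedAddCommGroup H) (_ : InnerProductSpace ℂ H)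
      (_ : CompleteSpace H) (v₀ : H) (T : Fin N → H →L[ℂ] H) (P₀ : H →L[ℂ] H),
      ‖v₀‖ = 1 ∧
      IsIdempotentElem P₀ ∧ IsSelfAdjoint P₀ ∧
      LinearMap.range (P₀ : H →ₗ[ℂ] H) = Submodule.span ℂ {v₀} ∧
      (∑ j, T j ∘L ContinuousLinearMap.adjoint (T j)) + P₀ = 1 ∧
      (∀ i, ContinuousLinearMap.adjoint (T i) ∘L T i =
        (∑ j, (A i j : ℂ) • (T j ∘L ContinuousLinearMap.adjoint (T j))) + P₀) := by
  classical
  refine ⟨Stmt8Aux.ℓ2 (Stmt8Aux.W A), inferInstance, inferInstance, inferInstance,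
    Stmt8Aux.v0 A, fun i => Stmt8Aux.Tc A i, Stmt8Aux.P0 A,
    Stmt8Aux.norm_v0 A, Stmt8Aux.P0_idem A, Stmt8Aux.P0_selfAdjoint A,
    Stmt8Aux.range_P0 A, ?_, ?_⟩
  · simp only [Stmt8Aux.Tc_adjoint]
    ext f w
    show ((∑ j, Stmt8Aux.Tc A j ∘L Stmt8Aux.Sc A j) f : ∀ _ : Stmt8Aux.W A, ℂ) w
        + (Stmt8Aux.P0 A f : ∀ _ : Stmt8Aux.W A, ℂ) w = (f : ∀ _ : Stmt8Aux.W A, ℂ) w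
    rw [ContinuousLinearMap.sum_apply, lp.coeFn_sum, Finset.sum_apply]
    simp only [Stmt8Aux.TS_apply, Stmt8Aux.P0_apply]
    obtain ⟨l, hl⟩ := w
    cases l with
    | nil => simp
    | cons j' t => simp
  · intro i
    simp only [Stmt8Aux.Tc_adjoint]
    ext f w
    show ((Stmt8Aux.Sc A i ∘L Stmt8Aux.Tc A i) f : ∀ _ : Stmt8Aux.W A, ℂ) w
      = ((∑ j, (A i j : ℂ) • (Stmt8Aux.Tc A j ∘L Stmt8Aux.Sc A j)) f : ∀ _ : Stmt8Aux.W A, ℂ) w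
        + (Stmt8Aux.P0 A f : ∀ _ : Stmt8Aux.W A, ℂ) w
    rw [Stmt8Aux.ST_apply, ContinuousLinearMap.sum_apply, lp.coeFn_sum, Finset.sum_apply]
    simp only [ContinuousLinearMap.smul_apply, lp.coeFn_smul, Pi.smul_apply,
      Stmt8Aux.TS_apply, Stmt8Aux.P0_apply, smul_eq_mul]
    obtain ⟨l, hl⟩ := w
    cases l with
    | nil =>
        simp [Stmt8Aux.Adm, List.Chain']
    | cons j' t =>
        have hAdm : Stmt8Aux.Adm A (i :: j' :: t) ↔ A i j' = 1 := by
          rw [Stmt8Aux.Adm, List.Chain', List.isChain_cons_cons]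
          exact ⟨fun h => h.1, fun h => ⟨h, hl⟩⟩
        rcases h01 i j' with h | h
        · rw [if_neg (by rw [hAdm, h]; norm_num)]
          simp [h]
        · rw [if_pos (hAdm.mpr h)]
          simp [h]

end
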